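/- (Special case $\omega = 1$ of Lemma on general position.) Let $\mathcal{P} = \{P_1,\ldots,P_s\} \subset \mathbb{R}[X_1,\ldots,X_k]$ be symmetric polynomials of degree at most $d$, and let $\varepsilon_1,\ldots,\varepsilon_s$ be elements of a real closed extension $\mathbb{R}'$ of $\mathbb{R}$ that are algebraically independent over $\mathbb{R}$. Then any subcollection of $\{P_i \pm \varepsilon_i : 1 \le i \le s\}$ of cardinality greater than $\min(k,d)$ has empty common zero set in $\mathbb{R}'^k$. -/

import Mathlib

open MvPolynomial Function

noncomputable def eqA (v n : ℕ) : {g : Fin v → ℕ // ∑ i, g i ≤ n} ≃ {g : Fin (v+1) → ℕ // ∑ i, g i = n} where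
  toFun g := ⟨Fin.snoc g.1 (n - ∑ i, g.1 i), by
    rw [Fin.sum_univ_castSucc]
    simp only [Fin.snoc_castSucc, Fin.snoc_last]
    omega
    ⟩
  invFun g := ⟨fun i => g.1 i.castSucc, by
    have := g.2
    rw [Fin.sum_univ_castSucc] at this
    show ∑ i : Fin v, g.1 i.castSucc ≤ n
    omega⟩
  left_inv g := by ext i; simp
  right_inv g := by
    ext i
    refine Fin.lastCases ?_ (fun j => ?_) i
    · have := g.2
      rw [Fin.sum_univ_castSucc] at this
      simp only [Fin.snoc_last]
      omega
    · simp

noncomputable def eqB (v n : ℕ) :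
    {f : Fin v →₀ ℕ // (f.sum fun _ e => e) ≤ n} ≃ {g : Fin v → ℕ // ∑ i, g i ≤ n} :=
  (Finsupp.equivFunOnFinite.subtypeEquiv fun f => by
    rw [Finsupp.sum_fintype]
    · rfl
    · intro; rfl)

noncomputable def eqB' (v n : ℕ) :
    {f : Fin (v+1) →₀ ℕ // (f.sum fun _ e => e) = n} ≃ {g : Fin (v+1) → ℕ // ∑ i, g i = n} :=
  (Finsupp.equivFunOnFinite.subtypeEquiv fun f => by
    rw [Finsupp.sum_fintype]
    · rfl
    · intro; rfl)

noncomputable def eqC2 (v n : ℕ) :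
    {f : Fin (v+1) →₀ ℕ // (f.sum fun _ e => e) = n} ≃ Sym (Fin (v+1)) n where
  toFun f := ⟨Finsupp.toMultiset f.1, by
    rw [Finsupp.card_toMultiset]; exact f.2⟩
  invFun m := ⟨Multiset.toFinsupp m.1, by
    show ((Multiset.toFinsupp (α := Fin (v+1)) ↑m).sum fun _ => id) = n
    rw [← Finsupp.card_toMultiset, Multiset.toFinsupp_toMultiset]; exact m.2⟩
  left_inv f := by
    classical
    apply Subtype.ext
    exact Finsupp.toMultiset_toFinsupp f.1
  right_inv m := by
    apply Subtype.ext
    exact Multiset.toFinsupp_toMultiset m.1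

noncomputable def eqC (v n : ℕ) :
    {g : Fin (v+1) → ℕ // ∑ i, g i = n} ≃ Sym (Fin (v+1)) n :=
  ((eqB' v n).symm).trans (eqC2 v n)

noncomputable def eqD (v n : ℕ) :
    {f : Fin v →₀ ℕ // (f.sum fun _ e => e) ≤ n} ≃ Sym (Fin (v+1)) n :=
  ((eqB v n).trans (eqA v n)).trans (eqC v n)

theorem count_lemma {F : Type*} [Field F] (v n : ℕ) :
    Module.finrank F (restrictTotalDegree (Fin v) F n) = (n + v).choose v := by
  classical
  rw [show restrictTotalDegree (Fin v) F n
      = restrictSupport F { f : Fin v →₀ ℕ | (f.sum fun _ e => e) ≤ n } from rfl]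
  have b := MvPolynomial.basisRestrictSupport F { f : Fin v →₀ ℕ | (f.sum fun _ e => e) ≤ n }
  haveI : Fintype ↥{f : Fin v →₀ ℕ | (f.sum fun _ e => e) ≤ n} :=
    Fintype.ofEquiv _ (eqD v n).symm
  rw [Module.finrank_eq_card_basis b]
  calc Fintype.card ↥{f : Fin v →₀ ℕ | (f.sum fun _ e => e) ≤ n}
      = Fintype.card (Sym (Fin (v+1)) n) := Fintype.card_congr (eqD v n)
    _ = (n + v).choose v := by
        rw [Sym.card_sym_eq_choose, Fintype.card_fin]
        rw [show v + 1 + n - 1 = n + v by omega, Nat.choose_symm_add]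

theorem descFac_le (t D m : ℕ) (hD : 1 ≤ D) :
    (t * D + m).descFactorial m ≤ D ^ m * (t + m).descFactorial m := by
  rw [Nat.descFactorial_eq_prod_range, Nat.descFactorial_eq_prod_range]
  calc ∏ i ∈ Finset.range m, (t * D + m - i)
      ≤ ∏ i ∈ Finset.range m, (D * (t + m - i)) := by
        refine Finset.prod_le_prod' fun i hi => ?_
        rw [Finset.mem_range] at hi
        rw [show t + m - i = t + (m - i) by omega]
        have h4 : m - i ≤ D * (m - i) := Nat.le_mul_of_pos_left _ hD
        have h5 : D * (t + (m - i)) = t * D + D * (m - i) := by ring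
        omega
    _ = D ^ m * ∏ i ∈ Finset.range m, (t + m - i) := by
        rw [Finset.prod_mul_distrib, Finset.prod_const, Finset.card_range]

theorem choose_le (t D m : ℕ) (hD : 1 ≤ D) :
    (t * D + m).choose m ≤ D ^ m * (t + m).choose m := by
  have h := descFac_le t D m hD
  rw [Nat.descFactorial_eq_factorial_mul_choose, Nat.descFactorial_eq_factorial_mul_choose] at h
  rw [show D ^ m * (m.factorial * ((t+m).choose m))
      = m.factorial * (D ^ m * (t+m).choose m) by ring] at h
  exact Nat.le_of_mul_le_mul_left h (Nat.factorial_pos m)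

theorem choose_lt (D m : ℕ) (hD : 1 ≤ D) :
    ((m + 1) * D ^ m * D + m).choose m < ((m + 1) * D ^ m + (m + 1)).choose (m + 1) := by
  set t := (m + 1) * D ^ m with ht
  have key : (t + m + 1) * ((t + m).choose m) = ((t + m).choose m) * (t + m + 1) := by ring
  have h1 : (t + m + 1).choose (m + 1) * (m + 1) = (t + m).choose m * (t + m + 1) := by
    have := Nat.add_one_mul_choose_eq (t + m) m
    simp (config := { failIfUnchanged := false }) only [Nat.succ_eq_add_one] at this
    rw [← this, Nat.mul_comm]
  have hpos : 0 < (t + m).choose m := Nat.choose_pos (by omega)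
  have h2 : D ^ m * (t + m).choose m * (m + 1) < (t + m).choose m * (t + m + 1) := by
    have : D ^ m * (m + 1) < t + m + 1 := by
      rw [ht]; nlinarith [pow_pos (Nat.lt_of_lt_of_le Nat.zero_lt_one hD) m]
    calc D ^ m * (t + m).choose m * (m + 1) = (t + m).choose m * (D ^ m * (m + 1)) := by ring
      _ < (t + m).choose m * (t + m + 1) := by
          exact (Nat.mul_lt_mul_left hpos).mpr this
  have h3 := choose_le t D m hD
  have : (t * D + m).choose m * (m+1) < (t + m + 1).choose (m+1) * (m+1) := by
    rw [h1]
    calc (t * D + m).choose m * (m+1) ≤ D ^ m * (t + m).choose m * (m + 1) :=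
          Nat.mul_le_mul_right _ h3
      _ < _ := h2
  exact Nat.lt_of_mul_lt_mul_right this

theorem totalDegree_aeval_le {F : Type*} [CommRing F] {m r : ℕ}
    (G : Fin r → MvPolynomial (Fin m) F) (D : ℕ) (hG : ∀ i, (G i).totalDegree ≤ D)
    (p : MvPolynomial (Fin r) F) :
    (aeval G p).totalDegree ≤ p.totalDegree * D := by
  conv_lhs => rw [p.as_sum, map_sum]
  refine (totalDegree_finset_sum _ _).trans ?_
  rw [Finset.sup_le_iff]
  intro t ht
  rw [aeval_monomial]
  refine (totalDegree_mul _ _).trans ?_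
  have h1 : (algebraMap F (MvPolynomial (Fin m) F) (coeff t p)).totalDegree = 0 :=
    totalDegree_C _
  rw [h1, zero_add]
  rw [Finsupp.prod]
  refine (totalDegree_finset_prod _ _).trans ?_
  have h2 : ∀ i ∈ t.support, ((G i ^ t i).totalDegree) ≤ t i * D := fun i _ =>
    (totalDegree_pow _ _).trans (Nat.mul_le_mul_left _ (hG i))
  refine (Finset.sum_le_sum h2).trans ?_
  rw [← Finset.sum_mul]
  refine Nat.mul_le_mul_right _ ?_
  have : (t.sum fun _ e => e) ≤ p.totalDegree := le_totalDegree ht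
  rw [Finsupp.sum] at this
  exact this

theorem partB {F : Type*} [Field F] (m : ℕ) (G : Fin (m+1) → MvPolynomial (Fin m) F) :
    ¬ AlgebraicIndependent F G := by
  intro hG
  have hinj : Function.Injective
      (aeval G : MvPolynomial (Fin (m+1)) F →ₐ[F] MvPolynomial (Fin m) F) :=
    algebraicIndependent_iff_injective_aeval.mp hG
  set D := max 1 (Finset.univ.sup fun i => (G i).totalDegree) with hDdef
  have hD : 1 ≤ D := le_max_left _ _
  have hGD : ∀ i, (G i).totalDegree ≤ D := fun i =>
    le_max_of_le_right (Finset.le_sup (f := fun i => (G i).totalDegree) (Finset.mem_univ i))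
  set t := (m + 1) * D ^ m with htdef
  have hmapmem : ∀ p ∈ restrictTotalDegree (Fin (m+1)) F t,
      (aeval G : MvPolynomial (Fin (m+1)) F →ₐ[F] MvPolynomial (Fin m) F).toLinearMap p
        ∈ restrictTotalDegree (Fin m) F (t * D) := by
    intro p hp
    rw [mem_restrictTotalDegree] at hp ⊢
    exact (totalDegree_aeval_le G D hGD p).trans (Nat.mul_le_mul_right _ hp)
  let L := ((aeval G : MvPolynomial (Fin (m+1)) F →ₐ[F] MvPolynomial (Fin m) F).toLinearMap).restrict hmapmem
  have hLinj : Function.Injective L := by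
    intro a b hab
    apply Subtype.ext
    apply hinj
    exact congrArg Subtype.val hab
  have hle := LinearMap.finrank_le_finrank_of_injective (f := L) hLinj
  rw [count_lemma, count_lemma] at hle
  have hlt := choose_lt D m hD
  rw [← htdef] at hlt
  omega

theorem totalDegree_esymm_le (k n : ℕ) :
    (esymm (Fin k) ℝ n).totalDegree ≤ n := by
  rw [esymm]
  refine (totalDegree_finset_sum _ _).trans ?_
  rw [Finset.sup_le_iff]
  intro t ht
  refine (totalDegree_finset_prod _ _).trans ?_
  rw [Finset.mem_powersetCard] at ht
  calc ∑ i ∈ t, (X i : MvPolynomial (Fin k) ℝ).totalDegree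
      ≤ ∑ i ∈ t, 1 := Finset.sum_le_sum fun i _ => by rw [totalDegree_X]
    _ = t.card := by rw [Finset.sum_const, smul_eq_mul, mul_one]
    _ = n := ht.2

theorem card_le_fin {k : ℕ} (j : Fin k) :
    (Finset.univ.filter fun i : Fin k => i.val ≤ j.val).card = j.val + 1 := by
  have : (Finset.univ.filter fun i : Fin k => i.val ≤ j.val) = Finset.Iic j := by
    ext i; simp only [Finset.mem_filter, Finset.mem_Iic, Finset.mem_univ, true_and, Fin.le_def]
  rw [this, Fin.card_Iic]

theorem sum_accumulate (k : ℕ) (t : Fin k → ℕ) :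
    ∑ i, Fin.accumulate k k t i = ∑ j : Fin k, (j.val + 1) * t j := by
  simp_rw [Fin.accumulate_apply]
  simp_rw [Finset.sum_filter]
  rw [Finset.sum_comm]
  refine Finset.sum_congr rfl fun j _ => ?_
  rw [← Finset.sum_filter, Finset.sum_const, smul_eq_mul, card_le_fin]

open AddMonoidAlgebra in
theorem partA (k d : ℕ) (p : MvPolynomial (Fin k) ℝ) (hsym : p.IsSymmetric)
    (hdeg : p.totalDegree ≤ d) :
    p ∈ (aeval (fun j : Fin (min k d) => esymm (Fin k) ℝ (j.val + 1)) :
        MvPolynomial (Fin (min k d)) ℝ →ₐ[ℝ] MvPolynomial (Fin k) ℝ).range := by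
  classical
  set g : Fin (min k d) → MvPolynomial (Fin k) ℝ := fun j => esymm (Fin k) ℝ (j.val + 1) with hg
  -- membership of esymm-monomials
  have memE : ∀ (c : ℝ) (t : Fin k →₀ ℕ), (∀ j : Fin k, t j ≠ 0 → (j : ℕ) < min k d) →
      esymmAlgHomMonomial (Fin k) t c ∈ (aeval g :
        MvPolynomial (Fin (min k d)) ℝ →ₐ[ℝ] MvPolynomial (Fin k) ℝ).range := by
    intro c t ht
    rw [esymmAlgHomMonomial, esymmAlgHom_apply, aeval_monomial]
    refine Subalgebra.mul_mem _ (Subalgebra.algebraMap_mem _ c) ?_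
    rw [Finsupp.prod]
    refine Subalgebra.prod_mem _ fun j hj => Subalgebra.pow_mem _ ?_ _
    have hjm : (j : ℕ) < min k d := ht j (Finsupp.mem_support_iff.mp hj)
    exact ⟨X ⟨j.val, hjm⟩, by show aeval g (X ⟨j.val, hjm⟩) = _; rw [aeval_X]⟩
  -- the inductive claim
  suffices H : ∀ u : Lex (Fin k →₀ ℕ), ∀ p : MvPolynomial (Fin k) ℝ, p.IsSymmetric →
      p.totalDegree ≤ d → p ≠ 0 → p.supDegree toLex = u →
      p ∈ (aeval g : MvPolynomial (Fin (min k d)) ℝ →ₐ[ℝ] MvPolynomial (Fin k) ℝ).range by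
    obtain rfl | h0 := eq_or_ne p 0
    · exact Subalgebra.zero_mem _
    · exact H _ p hsym hdeg h0 rfl
  intro u
  induction u using WellFoundedLT.induction with
  | _ u ih =>
  intro p hsym hdeg h0 he
  subst he
  set c := p.leadingCoeff toLex with hc
  have hc0 : c ≠ 0 := by rwa [hc, Ne, leadingCoeff_eq_zero toLex.injective]
  set t : Fin k →₀ ℕ :=
    Finsupp.equivFunOnFinite.symm (Fin.invAccumulate k k ↑(ofLex <| p.supDegree toLex)) with htdef
  have hct : ⇑t = Fin.invAccumulate k k ↑(ofLex <| p.supDegree toLex) := by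
    rw [htdef]; exact Finsupp.equivFunOnFinite.apply_symm_apply _
  have hacc : Fin.accumulate k k ⇑t = ↑(ofLex <| p.supDegree toLex) := by
    rw [hct]
    exact Fin.accumulate_invAccumulate le_rfl hsym.antitone_supDegree
  -- the supDegree exponent is in the support
  obtain ⟨a, ha, hae⟩ := exists_supDegree_mem_support toLex h0
  have hofLex : (ofLex (p.supDegree toLex) : Fin k →₀ ℕ) = a := by rw [hae]; rfl
  have hsumd : ∑ i : Fin k, (ofLex (p.supDegree toLex) : Fin k →₀ ℕ) i ≤ d := by
    rw [hofLex]
    have h1 : (a.sum fun _ e => e) ≤ p.totalDegree := le_totalDegree ha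
    rw [Finsupp.sum_fintype _ _ (fun _ => rfl)] at h1
    exact h1.trans hdeg
  -- support condition for t
  have hts : ∀ j : Fin k, t j ≠ 0 → (j : ℕ) < min k d := by
    intro j hj
    rw [hct] at hj
    have hj1 : (ofLex (p.supDegree toLex) : Fin k →₀ ℕ) j ≠ 0 := by
      rw [Fin.invAccumulate] at hj
      rw [dif_pos j.isLt] at hj
      intro hzero
      apply hj
      have : (⟨j.val, j.isLt⟩ : Fin k) = j := by ext; rfl
      rw [this, hzero]
      exact Nat.zero_sub _
    -- antitone: all earlier entries are ≥ 1
    have hanti := hsym.antitone_supDegree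
    have h1 : ∀ i : Fin k, i.val ≤ j.val → 1 ≤ (ofLex (p.supDegree toLex) : Fin k →₀ ℕ) i := by
      intro i hij
      have := hanti (show i ≤ j from hij)
      omega
    have hcard : j.val + 1 ≤ ∑ i : Fin k, (ofLex (p.supDegree toLex) : Fin k →₀ ℕ) i := by
      calc j.val + 1 = (Finset.univ.filter fun i : Fin k => i.val ≤ j.val).card * 1 := by
            rw [card_le_fin, mul_one]
        _ ≤ ∑ i ∈ Finset.univ.filter fun i : Fin k => i.val ≤ j.val,
              (ofLex (p.supDegree toLex) : Fin k →₀ ℕ) i := by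
            have := Finset.card_nsmul_le_sum
              (Finset.univ.filter fun i : Fin k => i.val ≤ j.val)
              (fun i => (ofLex (p.supDegree toLex) : Fin k →₀ ℕ) i) 1
              (fun i hi => h1 i (Finset.mem_filter.mp hi).2)
            simpa using this
        _ ≤ ∑ i : Fin k, (ofLex (p.supDegree toLex) : Fin k →₀ ℕ) i :=
            Finset.sum_le_sum_of_subset (Finset.filter_subset _ _)
    have : j.val + 1 ≤ d := hcard.trans hsumd
    omega
  -- weighted degree bound
  have hwt : ∑ j : Fin k, (j.val + 1) * t j ≤ d := by
    rw [← sum_accumulate, hacc]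
    exact hsumd
  -- the esymm monomial E
  set E := esymmAlgHomMonomial (Fin k) t c with hE
  have hdE : E.supDegree toLex = p.supDegree toLex := by
    rw [hE, ← ofLex_inj, DFunLike.ext'_iff, supDegree_esymmAlgHomMonomial hc0 t le_rfl]
    exact hacc
  have hlcE : E.leadingCoeff toLex = c := leadingCoeff_esymmAlgHomMonomial t le_rfl
  have hEmem : E ∈ (aeval g :
      MvPolynomial (Fin (min k d)) ℝ →ₐ[ℝ] MvPolynomial (Fin k) ℝ).range := memE c t hts
  have hdegE : E.totalDegree ≤ d := by
    rw [hE, esymmAlgHomMonomial, esymmAlgHom_apply, aeval_monomial, algebraMap_eq]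
    refine (totalDegree_mul _ _).trans ?_
    rw [totalDegree_C, zero_add, Finsupp.prod]
    refine (totalDegree_finset_prod _ _).trans ?_
    refine le_trans ?_ hwt
    calc ∑ j ∈ t.support, ((esymm (Fin k) ℝ (j.val + 1)) ^ t j).totalDegree
        ≤ ∑ j ∈ t.support, (j.val + 1) * t j := by
          refine Finset.sum_le_sum fun j _ => ?_
          refine (totalDegree_pow _ _).trans ?_
          calc t j * (esymm (Fin k) ℝ (j.val + 1)).totalDegree
              ≤ t j * (j.val + 1) := Nat.mul_le_mul_left _ (totalDegree_esymm_le _ _)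
            _ = (j.val + 1) * t j := Nat.mul_comm _ _
      _ ≤ ∑ j : Fin k, (j.val + 1) * t j := by
          refine Finset.sum_le_sum_of_subset_of_nonneg (Finset.subset_univ _) ?_
          intro j _ hj
          rw [Finsupp.notMem_support_iff.mp hj, Nat.mul_zero]
  obtain heq | hne := eq_or_ne p E
  · rw [heq]; exact hEmem
  have hlt := (supDegree_sub_lt_of_leadingCoeff_eq toLex.injective hdE.symm
    (by rw [hlcE, hc])).resolve_right hne
  have hsub0 : p - E ≠ 0 := sub_ne_zero.mpr hne
  have hsubsym : (p - E).IsSymmetric := hsym.sub (isSymmetric_esymmAlgHomMonomial _ _)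
  have hsubdeg : (p - E).totalDegree ≤ d := by
    rw [sub_eq_add_neg]
    refine (totalDegree_add _ _).trans ?_
    rw [totalDegree_neg]
    exact max_le hdeg hdegE
  have := ih _ hlt (p - E) hsubsym hsubdeg hsub0 rfl
  have hsum : p = (p - E) + E := by ring
  rw [hsum]
  exact Subalgebra.add_mem _ this hEmem

theorem stmt_14 (k d s : ℕ) (P : Fin s → MvPolynomial (Fin k) ℝ)
    (hsym : ∀ i (σ : Equiv.Perm (Fin k)), rename ⇑σ (P i) = P i)
    (hdeg : ∀ i, (P i).totalDegree ≤ d)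
    (R' : Type*) [Field R'] [LinearOrder R'] [IsStrictOrderedRing R'] [Algebra ℝ R']
    (ε : Fin s → R') (hind : AlgebraicIndependent ℝ ε)
    (T : Finset (Fin s)) (hT : min k d < T.card)
    (sgn : Fin s → R') (hsgn : ∀ i, sgn i = 1 ∨ sgn i = -1) :
    ¬ ∃ x : Fin k → R', ∀ i ∈ T, aeval x (P i) + sgn i * ε i = 0 := by
  rintro ⟨x, hx⟩
  set m := min k d with hm
  set e : Fin m → MvPolynomial (Fin k) ℝ := fun j => esymm (Fin k) ℝ (j.val + 1) with he
  have hrep : ∀ i : Fin s, ∃ Q : MvPolynomial (Fin m) ℝ, P i = aeval e Q := by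
    intro i
    obtain ⟨Q, hQ⟩ := partA k d (P i) (fun σ => hsym i σ) (hdeg i)
    exact ⟨Q, hQ.symm⟩
  choose Q hQ using hrep
  set y : Fin m → R' := fun j => aeval x (e j) with hy
  have hsgn' : ∀ i, ∃ c : ℝ, algebraMap ℝ R' c = sgn i := by
    intro i; rcases hsgn i with h | h
    · exact ⟨1, by rw [map_one, h]⟩
    · exact ⟨-1, by rw [map_neg, map_one, h]⟩
  choose cs hcs using hsgn'
  have hcompQ : ∀ i, aeval x (P i) = aeval y (Q i) := by
    intro i
    rw [hQ i]
    exact AlgHom.congr_fun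
      (comp_aeval (f := e) (φ := (aeval x : MvPolynomial (Fin k) ℝ →ₐ[ℝ] R'))) (Q i)
  have hEps : ∀ i ∈ T, ε i = aeval y ((-(cs i)) • Q i) := by
    intro i hi
    have h0 := hx i hi
    have hsq : sgn i * sgn i = 1 := by rcases hsgn i with h | h <;> rw [h] <;> ring
    have h1 : ε i = -(sgn i * aeval x (P i)) := by
      linear_combination sgn i * h0 - ε i * hsq
    rw [map_smul, h1, hcompQ i, ← hcs i]
    rw [Algebra.smul_def, map_neg, neg_mul]
  have hT' : m + 1 ≤ T.card := hT
  set f := T.orderEmbOfCardLe hT' with hf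
  set G : Fin (m + 1) → MvPolynomial (Fin m) ℝ := fun l => (-(cs (f l))) • Q (f l) with hG
  have hcompose : (fun l => ε (f l)) =
      ⇑(aeval y : MvPolynomial (Fin m) ℝ →ₐ[ℝ] R') ∘ G := by
    funext l
    exact hEps (f l) (T.orderEmbOfCardLe_mem hT' l)
  have hindep : AlgebraicIndependent ℝ (fun l => ε (f l)) :=
    hind.comp f f.injective
  rw [hcompose] at hindep
  exact partB m G (AlgebraicIndependent.of_comp _ hindep)
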